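/- For all positive integers m and n, the number of m-Dyck paths from (0,0) to (mn, n) — lattice paths using unit north and east steps that never go below the line segment from (0,0) to (mn,n) — equals (1/(mn+1))·C(mn+n, n). -/

import Mathlib

open Finset
open Fin.NatCast

namespace Stmt6Aux

/- ----------  The cycle lemma  ---------- -/
theorem cycle_lemma (L : ℕ) (hL : 0 < L) (S : ℕ → ℤ)
    (hper : ∀ k, S (k + L) = S k - 1) :
    ∃! j, j < L ∧ ∀ k < L, S j ≤ S (j + k) := by
  have hex : ∃ j, j < L ∧ ∀ i < L, S j ≤ S i := by
    obtain ⟨j, hj, hmin⟩ := Finset.exists_min_image (Finset.range L) S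
      ⟨0, Finset.mem_range.2 hL⟩
    exact ⟨j, Finset.mem_range.1 hj, fun i hi => hmin i (Finset.mem_range.2 hi)⟩
  set j := Nat.find hex with hjdef
  obtain ⟨hjL, hjmin⟩ := Nat.find_spec hex
  have hstrict : ∀ i < j, S j < S i := by
    intro i hij
    have hiL : i < L := lt_trans hij hjL
    have hnot := Nat.find_min hex hij
    by_contra h
    push_neg at h
    exact hnot ⟨hiL, fun i' hi' => le_trans h (hjmin i' hi')⟩
  have key : ∀ a b, a < L → b < L → (∀ k < L, S a ≤ S (a + k)) →
      (∀ k < L, S b ≤ S (b + k)) → ¬ a < b := by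
    intro a b haL hbL hga hgb hab
    have h1 : S a ≤ S b := by
      have := hga (b - a) (by omega)
      rwa [show a + (b - a) = b by omega] at this
    have h2 : S b ≤ S (a + L) := by
      have := hgb (a + L - b) (by omega)
      rwa [show b + (a + L - b) = a + L by omega] at this
    have h3 : S (a + L) = S a - 1 := hper a
    omega
  have hg : ∀ k < L, S j ≤ S (j + k) := by
    intro k hk
    rcases lt_or_ge (j + k) L with h | h
    · exact hjmin _ h
    · rcases Nat.eq_zero_or_pos k with rfl | hk0
      · simp
      have h2 : j + k - L < j := by omega
      have h3 : S (j + k) = S (j + k - L) - 1 := by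
        have := hper (j + k - L)
        rwa [show j + k - L + L = j + k by omega] at this
      have := hstrict _ h2
      omega
  refine ⟨j, ⟨hjL, hg⟩, ?_⟩
  intro j' ⟨hj'L, hg'⟩
  rcases Nat.lt_trichotomy j' j with h | h | h
  · exact absurd h (key j' j hj'L hjL hg' hg)
  · exact h
  · exact absurd h (key j j' hjL hj'L hg hg')

/- ----------  Partial sums, rotations  ---------- -/

def bval (m : ℕ) (b : Bool) : ℤ := if b then (m : ℤ) else -1

def psum (m L : ℕ) [NeZero L] (w : Fin L → Bool) (k : ℕ) : ℤ :=
  ∑ i ∈ Finset.range k, bval m (w i)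

def rot (L : ℕ) [NeZero L] (j : Fin L) (w : Fin L → Bool) : Fin L → Bool :=
  fun i => w (i + j)

lemma rot_rot_neg (L : ℕ) [NeZero L] (j : Fin L) (w : Fin L → Bool) :
    rot L j (rot L (-j) w) = w := by
  funext i
  simp [rot]

lemma sum_bval_eq (m L : ℕ) [NeZero L] (w : Fin L → Bool) (s : Finset (Fin L)) :
    ∑ i ∈ s, bval m (w i)
      = m * #(s.filter (fun i => w i = true)) - #(s.filter (fun i => w i = false)) := by
  rw [← Finset.sum_filter_add_sum_filter_not s (fun i => w i = true)]
  have h1 : ∑ i ∈ s.filter (fun i => w i = true), bval m (w i)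
      = #(s.filter (fun i => w i = true)) * (m : ℤ) := by
    rw [Finset.sum_congr rfl (fun i hi => ?_), Finset.sum_const, nsmul_eq_mul]
    have := (Finset.mem_filter.1 hi).2
    simp [bval, this]
  have h2 : ∑ i ∈ s.filter (fun i => ¬ w i = true), bval m (w i)
      = #(s.filter (fun i => w i = false)) * (-1 : ℤ) := by
    have he : s.filter (fun i => ¬ w i = true) = s.filter (fun i => w i = false) := by
      apply Finset.filter_congr
      intro i _
      simp
    rw [he, Finset.sum_congr rfl (fun i hi => ?_), Finset.sum_const, nsmul_eq_mul]
    have := (Finset.mem_filter.1 hi).2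
    simp [bval, this]
  rw [h1, h2]; ring

lemma trues_add_falses (L : ℕ) [NeZero L] (w : Fin L → Bool) :
    #(univ.filter (fun i => w i = true)) + #(univ.filter (fun i => w i = false)) = L := by
  have := Finset.card_filter_add_card_filter_not (s := (univ : Finset (Fin L)))
    (p := fun i => w i = true)
  have he : (univ : Finset (Fin L)).filter (fun i => ¬ w i = true)
      = univ.filter (fun i => w i = false) := by
    apply Finset.filter_congr; intro i _; simp
  rw [he] at this
  simpa using this

lemma sum_bval_univ (m n L : ℕ) [NeZero L] (hL : L = m * n + n + 1)
    (w : Fin L → Bool) (hw : #(univ.filter (fun i => w i = true)) = n) :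
    ∑ i : Fin L, bval m (w i) = -1 := by
  rw [sum_bval_eq m L w univ]
  have h := trues_add_falses L w
  rw [hw] at h ⊢
  have hE : #(univ.filter (fun i => w i = false)) = m * n + 1 := by omega
  rw [hE]
  push_cast
  ring

lemma psum_L (m n L : ℕ) [NeZero L] (hL : L = m * n + n + 1)
    (w : Fin L → Bool) (hw : #(univ.filter (fun i => w i = true)) = n) :
    psum m L w L = -1 := by
  rw [psum, ← Fin.sum_univ_eq_sum_range (fun i => bval m (w i)) L]
  rw [← sum_bval_univ m n L hL w hw]
  exact Finset.sum_congr rfl (fun i _ => by rw [Fin.cast_val_eq_self])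

lemma psum_add_L (m n L : ℕ) [NeZero L] (hL : L = m * n + n + 1)
    (w : Fin L → Bool) (hw : #(univ.filter (fun i => w i = true)) = n) (k : ℕ) :
    psum m L w (k + L) = psum m L w k - 1 := by
  rw [psum, Finset.sum_range_add]
  have : ∑ i ∈ Finset.range L, bval m (w ((k + i : ℕ) : Fin L)) = -1 := by
    have h1 : ∀ i : ℕ, ((k + i : ℕ) : Fin L) = (k : Fin L) + (i : Fin L) := by
      intro i; push_cast; ring
    simp_rw [h1]
    rw [← Fin.sum_univ_eq_sum_range (fun i => bval m (w ((k : Fin L) + (i : Fin L)))) L]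
    simp_rw [Fin.cast_val_eq_self]
    rw [Fintype.sum_equiv (Equiv.addLeft ((k : ℕ) : Fin L))
      (fun i => bval m (w ((k : ℕ) + i))) (fun i => bval m (w i)) (fun i => rfl)]
    exact sum_bval_univ m n L hL w hw
  rw [this]
  rfl

lemma psum_rot (m L : ℕ) [NeZero L] (j : Fin L) (w : Fin L → Bool) (k : ℕ) :
    psum m L (rot L j w) k = psum m L w (j.val + k) - psum m L w j.val := by
  rw [psum, psum, psum, Finset.sum_range_add]
  have : ∀ i : ℕ, bval m ((rot L j w) i) = bval m (w ((j.val + i : ℕ) : Fin L)) := by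
    intro i
    have : ((j.val + i : ℕ) : Fin L) = (i : Fin L) + j := by
      push_cast [Fin.cast_val_eq_self]; exact add_comm _ _
    rw [this]; rfl
  simp_rw [this]
  ring

lemma rot_card (L : ℕ) [NeZero L] (j : Fin L) (w : Fin L → Bool) :
    #(univ.filter (fun i => rot L j w i = true)) = #(univ.filter (fun i => w i = true)) := by
  apply Finset.card_bij' (fun i _ => i + j) (fun i _ => i - j)
  · intro i hi; simp at hi ⊢; exact hi
  · intro i hi; simp at hi ⊢; simpa [rot] using hi
  · intro i _; simp
  · intro i _; simp

/- ----------  Padding  ---------- -/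

def pad (N : ℕ) (d : Fin N → Bool) : Fin (N+1) → Bool := Fin.snoc d false

@[simp] lemma pad_castSucc (N : ℕ) (d : Fin N → Bool) (i : Fin N) :
    pad N d i.castSucc = d i := by
  simp [pad]

@[simp] lemma pad_last (N : ℕ) (d : Fin N → Bool) :
    pad N d (Fin.last N) = false := by
  simp [pad]

lemma pad_init (N : ℕ) (d : Fin N → Bool) : Fin.init (pad N d) = d := by
  rw [pad, Fin.init_snoc]

lemma pad_of_last_false (N : ℕ) (w : Fin (N+1) → Bool) (hw : w (Fin.last N) = false) :
    pad N (Fin.init w) = w := by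
  rw [pad, ← hw, Fin.snoc_init_self]

lemma pad_true_count (N : ℕ) (d : Fin N → Bool) :
    #(univ.filter (fun i : Fin (N+1) => pad N d i = true))
      = #(univ.filter (fun i : Fin N => d i = true)) := by
  rw [Finset.card_filter, Finset.card_filter, Fin.sum_univ_castSucc]
  simp

lemma pad_prefix_count (N : ℕ) (d : Fin N → Bool) (b : Bool) (k : ℕ) (hk : k ≤ N) :
    #(univ.filter (fun i : Fin (N+1) => (i : ℕ) < k ∧ pad N d i = b))
      = #(univ.filter (fun i : Fin N => (i : ℕ) < k ∧ d i = b)) := by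
  rw [Finset.card_filter, Finset.card_filter, Fin.sum_univ_castSucc]
  have hlast : ¬ (N < k) := by omega
  simp [hlast]

lemma psum_eq_counts (m N : ℕ) (w : Fin (N+1) → Bool) (k : ℕ) (hk : k ≤ N + 1) :
    psum m (N+1) w k
      = m * #(univ.filter (fun i : Fin (N+1) => (i : ℕ) < k ∧ w i = true))
        - #(univ.filter (fun i : Fin (N+1) => (i : ℕ) < k ∧ w i = false)) := by
  have hr : Finset.range k = (Finset.range (N+1)).filter (fun i => i < k) := by
    ext i; simp; omega
  rw [psum, hr, Finset.sum_filter,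
    ← Fin.sum_univ_eq_sum_range (fun i => if i < k then bval m (w i) else 0) (N+1)]
  simp_rw [Fin.cast_val_eq_self]
  rw [← Finset.sum_filter, sum_bval_eq m (N+1) w, Finset.filter_filter, Finset.filter_filter]

lemma dyck_iff (m N : ℕ) (s : Fin N → Bool) (k : ℕ) (hk : k ≤ N) :
    (#(univ.filter (fun i : Fin N => (i : ℕ) < k ∧ s i = false))
      ≤ m * #(univ.filter (fun i : Fin N => (i : ℕ) < k ∧ s i = true)))
      ↔ 0 ≤ psum m (N+1) (pad N s) k := by
  rw [psum_eq_counts m N _ k (by omega), pad_prefix_count N s true k hk,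
    pad_prefix_count N s false k hk]
  rw [sub_nonneg]
  exact_mod_cast Iff.symm Nat.cast_le

lemma main_count (m n : ℕ) :
    Nat.card {s : Fin (m * n + n) → Bool //
        (Finset.univ.filter (fun i => s i = true)).card = n ∧
        ∀ k : ℕ, k ≤ m * n + n →
          (Finset.univ.filter (fun i : Fin (m * n + n) => (i : ℕ) < k ∧ s i = false)).card
            ≤ m * (Finset.univ.filter
                (fun i : Fin (m * n + n) => (i : ℕ) < k ∧ s i = true)).card}
      * (m * n + n + 1) = Nat.choose (m * n + n + 1) n := by
  classical
  set N := m * n + n with hN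
  set DyckT := {s : Fin N → Bool //
        (Finset.univ.filter (fun i => s i = true)).card = n ∧
        ∀ k : ℕ, k ≤ N →
          (Finset.univ.filter (fun i : Fin N => (i : ℕ) < k ∧ s i = false)).card
            ≤ m * (Finset.univ.filter
                (fun i : Fin N => (i : ℕ) < k ∧ s i = true)).card} with hD
  set A := {w : Fin (N+1) → Bool // #(univ.filter (fun i => w i = true)) = n} with hA
  -- rotation of a padded word has the right true count
  have hcount : ∀ (d : Fin N → Bool) (j : Fin (N+1)),
      #(univ.filter (fun i => rot (N+1) (-j) (pad N d) i = true))
        = #(univ.filter (fun i : Fin N => d i = true)) := by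
    intro d j; rw [rot_card, pad_true_count]
  -- the map
  set F : DyckT × Fin (N+1) → A := fun p =>
    ⟨rot (N+1) (-p.2) (pad N p.1.1), by rw [hcount]; exact p.1.2.1⟩ with hF
  -- rotated padded Dyck words are "good"
  have hgood : ∀ (d : DyckT) (j : Fin (N+1)), ∀ k < N+1,
      psum m (N+1) (rot (N+1) (-j) (pad N d.1)) j.val
        ≤ psum m (N+1) (rot (N+1) (-j) (pad N d.1)) (j.val + k) := by
    intro d j k hk
    have h1 := psum_rot m (N+1) j (rot (N+1) (-j) (pad N d.1)) k
    rw [rot_rot_neg] at h1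
    have h2 : 0 ≤ psum m (N+1) (pad N d.1) k :=
      (dyck_iff m N d.1 k (by omega)).1 (d.2.2 k (by omega))
    linarith
  -- good words unrotate to Dyck words
  have hunrot : ∀ (w : Fin (N+1) → Bool), #(univ.filter (fun i => w i = true)) = n →
      ∀ j : Fin (N+1), (∀ k < N+1, psum m (N+1) w j.val ≤ psum m (N+1) w (j.val + k)) →
      (pad N (Fin.init (rot (N+1) j w)) = rot (N+1) j w) ∧
      (#(univ.filter (fun i : Fin N => Fin.init (rot (N+1) j w) i = true)) = n) ∧
      (∀ k : ℕ, k ≤ N →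
        #(univ.filter (fun i : Fin N => (i:ℕ) < k ∧ Fin.init (rot (N+1) j w) i = false))
          ≤ m * #(univ.filter (fun i : Fin N => (i:ℕ) < k ∧ Fin.init (rot (N+1) j w) i = true))) := by
    intro w hw j hj
    set u := rot (N+1) j w with hu
    have hcu : #(univ.filter (fun i => u i = true)) = n := by
      rw [hu, rot_card]; exact hw
    have hnn : ∀ k ≤ N, 0 ≤ psum m (N+1) u k := by
      intro k hk
      have h1 := psum_rot m (N+1) j w k
      have h2 := hj k (by omega)
      rw [← hu] at h1
      linarith
    have hL1 : psum m (N+1) u (N+1) = -1 := psum_L m n (N+1) (by omega) u hcu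
    have hsucc : psum m (N+1) u (N+1) = psum m (N+1) u N + bval m (u ((N : ℕ) : Fin (N+1))) :=
      Finset.sum_range_succ _ N
    have hNcast : ((N : ℕ) : Fin (N+1)) = Fin.last N := by
      apply Fin.ext; simp [Fin.val_natCast]
    have hlast : u (Fin.last N) = false := by
      rcases Bool.eq_false_or_eq_true (u (Fin.last N)) with h | h
      · exfalso
        have h0 := hnn N le_rfl
        rw [hNcast, h] at hsucc
        simp [bval] at hsucc
        have hm0 : (0:ℤ) ≤ m := by positivity
        linarith
      · exact h
    have hpad := pad_of_last_false N u hlast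
    refine ⟨hpad, ?_, ?_⟩
    · have h := pad_true_count N (Fin.init u)
      rw [hpad] at h
      rw [← h]; exact hcu
    · intro k hk
      rw [dyck_iff m N _ k hk, hpad]
      exact hnn k hk
  -- cycle lemma
  have hcyc : ∀ (w : Fin (N+1) → Bool), #(univ.filter (fun i => w i = true)) = n →
      ∃! j : ℕ, j < N+1 ∧ ∀ k < N+1, psum m (N+1) w j ≤ psum m (N+1) w (j + k) :=
    fun w hw => cycle_lemma (N+1) (Nat.succ_pos N) (psum m (N+1) w)
      (fun k => psum_add_L m n (N+1) (by omega) w hw k)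
  have hFbij : Function.Bijective F := by
    constructor
    · rintro ⟨⟨d1, hd1⟩, j1⟩ ⟨⟨d2, hd2⟩, j2⟩ hFeq
      have hw1 : rot (N+1) (-j1) (pad N d1) = rot (N+1) (-j2) (pad N d2) :=
        congrArg Subtype.val hFeq
      have hwc : #(univ.filter (fun i => rot (N+1) (-j1) (pad N d1) i = true)) = n := by
        rw [hcount]; exact hd1.1
      have hg1 := hgood ⟨d1, hd1⟩ j1
      have hg2' := hgood ⟨d2, hd2⟩ j2
      have hg2 : ∀ k < N+1, psum m (N+1) (rot (N+1) (-j1) (pad N d1)) j2.val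
          ≤ psum m (N+1) (rot (N+1) (-j1) (pad N d1)) (j2.val + k) := by
        rw [hw1]; exact hg2'
      obtain ⟨j0, _, huniq⟩ := hcyc _ hwc
      have e1 : (j1 : ℕ) = j0 := huniq j1.val ⟨j1.isLt, hg1⟩
      have e2 : (j2 : ℕ) = j0 := huniq j2.val ⟨j2.isLt, hg2⟩
      have hj12 : j1 = j2 := Fin.ext (by omega)
      have hdd : d1 = d2 := by
        have a1 : rot (N+1) j1 (rot (N+1) (-j1) (pad N d1)) = pad N d1 := rot_rot_neg _ _ _
        have a2 : rot (N+1) j2 (rot (N+1) (-j2) (pad N d2)) = pad N d2 := rot_rot_neg _ _ _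
        have : pad N d1 = pad N d2 := by
          rw [← a1, hw1, hj12, a2]
        rw [← pad_init N d1, this, pad_init]
      subst hdd; subst hj12; rfl
    · rintro ⟨w, hw⟩
      obtain ⟨j0, ⟨hj0L, hj0g⟩, -⟩ := hcyc w hw
      obtain ⟨hpadw, hc, hcond⟩ := hunrot w hw ⟨j0, hj0L⟩ hj0g
      refine ⟨⟨⟨Fin.init (rot (N+1) ⟨j0, hj0L⟩ w), hc, hcond⟩, ⟨j0, hj0L⟩⟩, ?_⟩
      apply Subtype.ext
      show rot (N+1) (-⟨j0, hj0L⟩) (pad N (Fin.init (rot (N+1) ⟨j0, hj0L⟩ w))) = w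
      rw [hpadw]
      have h := rot_rot_neg (N+1) (-⟨j0, hj0L⟩) w
      rwa [neg_neg] at h
  have hAcard : Nat.card A = (N+1).choose n := by
    have e : A ≃ {s : Finset (Fin (N+1)) // #s = n} :=
      { toFun := fun w => ⟨univ.filter (fun i => w.1 i = true), w.2⟩
        invFun := fun s => ⟨fun i => decide (i ∈ s.1), by
          have h : univ.filter (fun i : Fin (N+1) => decide (i ∈ s.1) = true) = s.1 := by
            ext i; simp
          rw [h]; exact s.2⟩
        left_inv := fun w => by
          apply Subtype.ext; funext i
          simp
        right_inv := fun s => by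
          apply Subtype.ext
          ext i; simp }
    rw [Nat.card_eq_fintype_card, Fintype.card_congr e, Fintype.card_finset_len,
      Fintype.card_fin]
  have hcard : Nat.card A = Nat.card DyckT * (N+1) := by
    rw [← Nat.card_eq_of_bijective F hFbij, Nat.card_prod,
      Nat.card_eq_fintype_card (α := Fin (N+1)), Fintype.card_fin]
  rw [← hcard, hAcard]
end Stmt6Aux



/-- For `m, n ≥ 1`, the number of `m`-Dyck paths of order `n` — lattice paths from
`(0,0)` to `(mn,n)` given by step sequences `s : Fin (mn+n) → Bool` (`true` = north,
`false` = east) with `n` north steps, staying weakly above the line `y = x/m` (after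
each prefix of `k` steps, the number of east steps is at most `m` times the number of
north steps) — equals `(1/(mn+1))·C(mn+n, n)`. -/
theorem stmt6 (m n : ℕ) (hm : 0 < m) (hn : 0 < n) :
    (Nat.card {s : Fin (m * n + n) → Bool //
        (Finset.univ.filter (fun i => s i = true)).card = n ∧
        ∀ k : ℕ, k ≤ m * n + n →
          (Finset.univ.filter (fun i : Fin (m * n + n) => (i : ℕ) < k ∧ s i = false)).card
            ≤ m * (Finset.univ.filter
                (fun i : Fin (m * n + n) => (i : ℕ) < k ∧ s i = true)).card} : ℚ)
    = (1 / (m * n + 1)) * Nat.choose (m * n + n) n := by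
  have key := Stmt6Aux.main_count m n
  set D := {s : Fin (m * n + n) → Bool //
        (Finset.univ.filter (fun i => s i = true)).card = n ∧
        ∀ k : ℕ, k ≤ m * n + n →
          (Finset.univ.filter (fun i : Fin (m * n + n) => (i : ℕ) < k ∧ s i = false)).card
            ≤ m * (Finset.univ.filter
                (fun i : Fin (m * n + n) => (i : ℕ) < k ∧ s i = true)).card} with hD
  have hq1 : ((m:ℚ) * n + n + 1) ≠ 0 := by positivity
  have hq2 : ((m:ℚ) * n + 1) ≠ 0 := by positivity
  have hkey : (Nat.card D : ℚ) * ((m:ℚ) * n + n + 1) = ((m * n + n + 1).choose n : ℚ) := by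
    exact_mod_cast congrArg (Nat.cast (R := ℚ)) key
  have hid : ((m * n + n).choose n : ℚ) * ((m:ℚ) * n + n + 1)
      = ((m * n + n + 1).choose n : ℚ) * ((m:ℚ) * n + 1) := by
    have h := Nat.choose_mul_succ_eq (m * n + n) n
    have h2 : m * n + n + 1 - n = m * n + 1 := by omega
    rw [h2] at h
    exact_mod_cast h
  have hfin : (Nat.card D : ℚ) * ((m:ℚ) * n + 1) = ((m * n + n).choose n : ℚ) := by
    apply mul_right_cancel₀ hq1
    calc (Nat.card D : ℚ) * ((m:ℚ) * n + 1) * ((m:ℚ) * n + n + 1)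
        = ((Nat.card D : ℚ) * ((m:ℚ) * n + n + 1)) * ((m:ℚ) * n + 1) := by ring
      _ = ((m * n + n + 1).choose n : ℚ) * ((m:ℚ) * n + 1) := by rw [hkey]
      _ = ((m * n + n).choose n : ℚ) * ((m:ℚ) * n + n + 1) := hid.symm
  rw [one_div, inv_mul_eq_div, eq_div_iff hq2]
  exact hfin
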